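/- Define g : ℝ → ℝ by g(u) := −√(1 + u²)·ln(√(1 + u²) + u) + u. Then g is strictly decreasing on ℝ and g(0) = 0; hence g(u) < 0 for all u > 0 and g(u) > 0 for all u < 0. -/
import Mathlib


/-- The auxiliary function `g(u) = -√(1+u²)·ln(√(1+u²)+u) + u` appearing in the
κ-derivative of the κ-exponential. -/
noncomputable def gAux (u : ℝ) : ℝ :=
  -Real.sqrt (1 + u ^ 2) * Real.log (Real.sqrt (1 + u ^ 2) + u) + u

lemma gAux_eq (u : ℝ) : gAux u = -Real.sqrt (1 + u ^ 2) * Real.arsinh u + u := by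
  rw [gAux, Real.arsinh, add_comm u]

lemma sqrt_one_add_sq_pos (u : ℝ) : 0 < Real.sqrt (1 + u ^ 2) :=
  Real.sqrt_pos.2 (by positivity)

lemma gAux_hasDerivAt (u : ℝ) :
    HasDerivAt gAux (-(u * Real.arsinh u / Real.sqrt (1 + u ^ 2))) u := by
  have hs : HasDerivAt (fun x : ℝ => Real.sqrt (1 + x ^ 2))
      (2 * u / (2 * Real.sqrt (1 + u ^ 2))) u := by
    have h1 : HasDerivAt (fun x : ℝ => 1 + x ^ 2) (2 * u) u := by
      simpa using ((hasDerivAt_pow 2 u).const_add 1)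
    exact h1.sqrt (by positivity)
  have h2 : HasDerivAt (fun x : ℝ => -Real.sqrt (1 + x ^ 2) * Real.arsinh x + x)
      (-(2 * u / (2 * Real.sqrt (1 + u ^ 2))) * Real.arsinh u +
        -Real.sqrt (1 + u ^ 2) * (Real.sqrt (1 + u ^ 2))⁻¹ + 1) u :=
    ((hs.neg.mul (Real.hasDerivAt_arsinh u))).add (hasDerivAt_id u)
  have hne : Real.sqrt (1 + u ^ 2) ≠ 0 := (sqrt_one_add_sq_pos u).ne'
  have heq : (fun x : ℝ => -Real.sqrt (1 + x ^ 2) * Real.arsinh x + x) = gAux := by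
    funext x; rw [gAux_eq]
  rw [heq] at h2
  convert h2 using 1
  field_simp
  ring

lemma gAux_deriv_neg {u : ℝ} (hu : u ≠ 0) :
    -(u * Real.arsinh u / Real.sqrt (1 + u ^ 2)) < 0 := by
  have h : 0 < u * Real.arsinh u := by
    rcases hu.lt_or_gt with h | h
    · have : Real.arsinh u < 0 := by
        simpa using Real.arsinh_lt_arsinh.2 h
      exact mul_pos_of_neg_of_neg h this
    · have : 0 < Real.arsinh u := by
        simpa using Real.arsinh_lt_arsinh.2 h
      exact mul_pos h this
  have := div_pos h (sqrt_one_add_sq_pos u)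
  linarith

lemma gAux_strictAnti : StrictAnti gAux := by
  have hcont : Continuous gAux := by
    have : Differentiable ℝ gAux := fun u => (gAux_hasDerivAt u).differentiableAt
    exact this.continuous
  have hIci : StrictAntiOn gAux (Set.Ici 0) := by
    apply strictAntiOn_of_deriv_neg (convex_Ici 0) (hcont.continuousOn)
    intro x hx
    rw [interior_Ici] at hx
    rw [(gAux_hasDerivAt x).deriv]
    exact gAux_deriv_neg (ne_of_gt hx)
  have hIic : StrictAntiOn gAux (Set.Iic 0) := by
    apply strictAntiOn_of_deriv_neg (convex_Iic 0) (hcont.continuousOn)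
    intro x hx
    rw [interior_Iic] at hx
    rw [(gAux_hasDerivAt x).deriv]
    exact gAux_deriv_neg (ne_of_lt hx)
  intro a b hab
  rcases le_total 0 a with ha | ha
  · exact hIci ha (le_of_lt (lt_of_le_of_lt ha hab)) hab
  · rcases le_total b 0 with hb | hb
    · exact hIic (hab.le.trans hb) hb hab
    · rcases eq_or_lt_of_le ha with h | h
      · subst h
        exact hIci Set.self_mem_Ici hb hab
      · calc gAux b ≤ gAux 0 := by
              rcases eq_or_lt_of_le hb with h' | h'
              · rw [h']
              · exact (hIci Set.self_mem_Ici hb h').le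
          _ < gAux a := hIic h.le Set.self_mem_Iic h

/-- `g` is strictly decreasing, vanishes at `0`, and is therefore negative on `(0,∞)`
and positive on `(-∞,0)`. -/
theorem gAux_strictAnti_and_signs :
    StrictAnti gAux ∧ gAux 0 = 0 ∧
    (∀ u : ℝ, 0 < u → gAux u < 0) ∧ (∀ u : ℝ, u < 0 → 0 < gAux u) := by
  have h0 : gAux 0 = 0 := by simp [gAux]
  refine ⟨gAux_strictAnti, h0, fun u hu => ?_, fun u hu => ?_⟩
  · have := gAux_strictAnti hu; rwa [h0] at this
  · have := gAux_strictAnti hu; rwa [h0] at this
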